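/- The operator T : ℓ² → ℓ² defined by T(x) = Σ_{n=1}^∞ f_n(‖x‖) e_n is globally Lipschitz continuous with Lipschitz constant at most √17 / 2. -/

import Mathlib

/-- The piecewise linear functions `f n` from the paper. -/
noncomputable def f (n : ℕ) (t : ℝ) : ℝ :=
  if t ≤ (2:ℝ)^(-(n:ℤ)-1) ∨ (2:ℝ)^(-(n:ℤ)+2) ≤ t then 0
  else if t ≤ (2:ℝ)^(-(n:ℤ)) then 2*(t - (2:ℝ)^(-(n:ℤ)-1))
  else if t ≤ (2:ℝ)^(-(n:ℤ)+1) then (2:ℝ)^(-(n:ℤ))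
  else (1/2)*((2:ℝ)^(-(n:ℤ)+2) - t)


/-- The Hilbert space ℓ² of square-summable real sequences. -/
noncomputable abbrev l2 := lp (fun _ : ℕ => ℝ) 2

/-- `v k t` is the length of `(-∞, t] ∩ [2^(1-k), 2^(2-k)]`. -/
noncomputable def v (k : ℕ) (t : ℝ) : ℝ :=
  min t ((2:ℝ)^(2-(k:ℤ))) - min t ((2:ℝ)^(1-(k:ℤ)))

lemma f_eq_v (m : ℕ) (t : ℝ) : f m t = 2 * v (m+2) t - (1/2) * v m t := by
  have h2 : (2:ℝ) ≠ 0 := by norm_num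
  obtain ⟨q, hq0, e0, e1, e2, e3, ev1, ev2, ev3, ev4⟩ :
      ∃ q:ℝ, 0 < q ∧ (2:ℝ)^(-(m:ℤ)-1) = q ∧ (2:ℝ)^(-(m:ℤ)) = 2*q ∧
        (2:ℝ)^(-(m:ℤ)+1) = 4*q ∧ (2:ℝ)^(-(m:ℤ)+2) = 8*q ∧
        (2:ℝ)^(2-((m+2:ℕ):ℤ)) = 2*q ∧ (2:ℝ)^(1-((m+2:ℕ):ℤ)) = q ∧
        (2:ℝ)^(2-(m:ℤ)) = 8*q ∧ (2:ℝ)^(1-(m:ℤ)) = 4*q := by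
    refine ⟨(2:ℝ)^(-(m:ℤ)-1), zpow_pos (by norm_num) _, rfl, ?_, ?_, ?_, ?_, ?_, ?_, ?_⟩ <;>
      push_cast <;>
      [rw [show (-(m:ℤ)) = (-(m:ℤ)-1)+1 by ring];
       rw [show (-(m:ℤ)+1) = (-(m:ℤ)-1)+1+1 by ring];
       rw [show (-(m:ℤ)+2) = (-(m:ℤ)-1)+1+1+1 by ring];
       rw [show (2-((m:ℤ)+2)) = (-(m:ℤ)-1)+1 by ring];
       rw [show (1-((m:ℤ)+2)) = (-(m:ℤ)-1) by ring];
       rw [show (2-(m:ℤ)) = (-(m:ℤ)-1)+1+1+1 by ring];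
       rw [show (1-(m:ℤ)) = (-(m:ℤ)-1)+1+1 by ring]] <;>
      simp only [zpow_add_one₀ h2] <;> ring_nf
  unfold f v
  rw [e0, e1, e2, e3, ev1, ev2, ev3, ev4]
  simp only [min_def]
  split_ifs <;> (try casesm _ ∨ _) <;> (try push_neg at *)
  all_goals linarith

section vprops

variable {r s : ℝ} (hrs : r ≤ s)

/-- The increment `B k = v k s - v k r`. -/
noncomputable def B (r s : ℝ) (k : ℕ) : ℝ := v k s - v k r

include hrs

lemma B_nonneg (k : ℕ) : 0 ≤ B r s k := by
  unfold B v
  have hab : (2:ℝ)^(1-(k:ℤ)) ≤ (2:ℝ)^(2-(k:ℤ)) :=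
    zpow_le_zpow_right₀ (by norm_num) (by omega)
  simp only [min_def]; split_ifs <;> linarith

lemma B_le (k : ℕ) : B r s k ≤ s - r := by
  unfold B v
  simp only [min_def]; split_ifs <;> linarith

lemma sum_B_le (S : Finset ℕ) : ∑ k ∈ S, B r s k ≤ s - r := by
  classical
  obtain ⟨N, hN⟩ : ∃ N, ∀ k ∈ S, k < N := ⟨(S.sup id) + 1, fun k hk => by
    have := Finset.le_sup (f := id) hk; simp at this; omega⟩
  calc ∑ k ∈ S, B r s k ≤ ∑ k ∈ Finset.range N, B r s k := by
        apply Finset.sum_le_sum_of_subset_of_nonneg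
        · intro k hk; exact Finset.mem_range.mpr (hN k hk)
        · intro k _ _; exact B_nonneg hrs k
    _ ≤ s - r := by
        have key : ∀ M : ℕ, ∑ k ∈ Finset.range M, B r s k
            = (min s 4 - min r 4) - (min s ((2:ℝ)^(2-(M:ℤ))) - min r ((2:ℝ)^(2-(M:ℤ)))) := by
          intro M
          induction M with
          | zero => norm_num
          | succ M ih =>
            rw [Finset.sum_range_succ, ih]
            unfold B v
            have : (2 - ((M+1:ℕ):ℤ)) = 1 - (M:ℤ) := by push_cast; ring
            rw [this]
            ring
        rw [key N]
        have h1 : min s 4 - min r 4 ≤ s - r := by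
          simp only [min_def]; split_ifs <;> linarith
        have h2 : 0 ≤ min s ((2:ℝ)^(2-(N:ℤ))) - min r ((2:ℝ)^(2-(N:ℤ))) := by
          simp only [min_def]; split_ifs <;> linarith
        linarith

lemma sum_B_sq_le (S : Finset ℕ) : ∑ k ∈ S, (B r s k)^2 ≤ (s - r)^2 := by
  calc ∑ k ∈ S, (B r s k)^2 ≤ ∑ k ∈ S, (s - r) * B r s k := by
        apply Finset.sum_le_sum
        intro k _
        have h1 := B_nonneg hrs k
        have h2 := B_le hrs k
        nlinarith
    _ = (s - r) * ∑ k ∈ S, B r s k := by rw [Finset.mul_sum]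
    _ ≤ (s - r) * (s - r) := by
        have := sum_B_le hrs S
        nlinarith [sum_B_le hrs S, B_nonneg hrs 0, hrs]
    _ = (s - r)^2 := by ring

/-- Main finite-sum bound. -/
lemma main_bound (S : Finset ℕ) :
    ∑ n ∈ S, (f (n+1) s - f (n+1) r)^2 ≤ 17/4 * (s - r)^2 := by
  classical
  have step1 : ∀ n, (f (n+1) s - f (n+1) r)^2
      ≤ 4 * (B r s (n+3))^2 + (1/4) * (B r s (n+1))^2 := by
    intro n
    have h1 : f (n+1) s - f (n+1) r = 2 * B r s (n+3) - (1/2) * B r s (n+1) := by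
      rw [f_eq_v, f_eq_v]
      unfold B
      have : n + 1 + 2 = n + 3 := by ring
      rw [this]; ring
    rw [h1]
    have ha := B_nonneg hrs (n+3)
    have hb := B_nonneg hrs (n+1)
    nlinarith
  calc ∑ n ∈ S, (f (n+1) s - f (n+1) r)^2
      ≤ ∑ n ∈ S, (4 * (B r s (n+3))^2 + (1/4) * (B r s (n+1))^2) :=
        Finset.sum_le_sum fun n _ => step1 n
    _ = 4 * ∑ n ∈ S, (B r s (n+3))^2 + (1/4) * ∑ n ∈ S, (B r s (n+1))^2 := by
        rw [Finset.sum_add_distrib, Finset.mul_sum, Finset.mul_sum]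
    _ ≤ 4 * (s-r)^2 + (1/4) * (s-r)^2 := by
        have i3 : ∑ n ∈ S, (B r s (n+3))^2 = ∑ m ∈ S.image (· + 3), (B r s m)^2 := by
          rw [Finset.sum_image (by intro a _ b _ h; have h' : a + 3 = b + 3 := h; omega)]
        have i1 : ∑ n ∈ S, (B r s (n+1))^2 = ∑ m ∈ S.image (· + 1), (B r s m)^2 := by
          rw [Finset.sum_image (by intro a _ b _ h; have h' : a + 1 = b + 1 := h; omega)]
        have b3 := sum_B_sq_le hrs (S.image (· + 3))
        have b1 := sum_B_sq_le hrs (S.image (· + 1))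
        rw [i3, i1]
        nlinarith
    _ = 17/4 * (s - r)^2 := by ring

end vprops

/-- The operator `T x = Σₙ f n (‖x‖) eₙ` is globally Lipschitz with constant `√17 / 2`. -/
theorem T_lipschitz (T : l2 → l2) (hT : ∀ (x : l2) (n : ℕ), T x n = f (n + 1) ‖x‖) :
    ∀ x y : l2, ‖T x - T y‖ ≤ Real.sqrt 17 / 2 * ‖x - y‖ := by
  have key : ∀ x y : l2, ‖y‖ ≤ ‖x‖ → ‖T x - T y‖ ≤ Real.sqrt 17 / 2 * ‖x - y‖ := by
    intro x y hrs
    have hC : 0 ≤ Real.sqrt 17 / 2 * ‖x - y‖ := by positivity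
    have hp : (0:ℝ) < (2 : ENNReal).toReal := by norm_num
    apply lp.norm_le_of_forall_sum_le hp hC
    intro S
    have htoReal : (2 : ENNReal).toReal = (2:ℝ) := by norm_num
    have hsub : ∀ i : ℕ, (T x - T y) i = f (i+1) ‖x‖ - f (i+1) ‖y‖ := by
      intro i
      have : (T x - T y) i = T x i - T y i := by
        rw [lp.coeFn_sub]; rfl
      rw [this, hT x i, hT y i]
    have hdist : ‖x‖ - ‖y‖ ≤ ‖x - y‖ := norm_sub_norm_le x y
    have hge : 0 ≤ ‖x‖ - ‖y‖ := by linarith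
    calc ∑ i ∈ S, ‖(T x - T y) i‖ ^ (2 : ENNReal).toReal
        = ∑ i ∈ S, (f (i+1) ‖x‖ - f (i+1) ‖y‖)^2 := by
          apply Finset.sum_congr rfl
          intro i _
          rw [htoReal, hsub i, Real.rpow_two, Real.norm_eq_abs, sq_abs]
      _ ≤ 17/4 * (‖x‖ - ‖y‖)^2 := main_bound hrs S
      _ ≤ 17/4 * ‖x - y‖^2 := by nlinarith
      _ = (Real.sqrt 17 / 2 * ‖x - y‖) ^ (2 : ENNReal).toReal := by
          rw [htoReal, Real.rpow_two]
          have : Real.sqrt 17 ^ 2 = 17 := Real.sq_sqrt (by norm_num)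
          nlinarith
  intro x y
  rcases le_total ‖y‖ ‖x‖ with h | h
  · exact key x y h
  · have h1 : T x - T y = -(T y - T x) := (neg_sub _ _).symm
    rw [h1, norm_neg, norm_sub_rev x y]
    exact key y x h
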